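/- Under the centered model with M_Z > 3 and for any λ ≥ 1, let β^h = ((1 + 1/‖μ‖₂²)/(‖μ‖₂⁴ + 6‖μ‖₂² + M_Z))^{1/2} μ. Then for β ∈ {β^h, −β^h} and every v ∈ ℝ^d, the Hessian of L^h_λ at (0, β) in the direction w = (0, v) satisfies w^⊤ ∇²L^h_λ(0, β) w ≥ [(2‖μ‖₂⁴ + (M_Z − 3)‖μ‖₂²)/(‖μ‖₂⁴ + 6‖μ‖₂² + M_Z)]·‖v‖₂², and the pure-α second derivative satisfies ∂²_{αα}L^h_λ(0, β) = 3(β^⊤μ)² + 3‖β‖₂² + λ − 1 > 0. -/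

import Mathlib

open MeasureTheory ProbabilityTheory
open scoped RealInnerProductSpace

/-- `ℝ^d` with the Euclidean norm. -/
abbrev Vec (d : ℕ) := EuclideanSpace ℝ (Fin d)

/-- `ℝ × ℝ^d` with the Euclidean (ℓ²) norm, the domain of the loss `(α, β) ↦ L(α, β)`. -/
abbrev Pr (d : ℕ) := WithLp 2 (ℝ × Vec d)

/-- Build the point `(α, β) ∈ ℝ × ℝ^d`. -/
noncomputable def mkp {d : ℕ} (α : ℝ) (β : Vec d) : Pr d :=
  (WithLp.equiv 2 (ℝ × Vec d)).symm (α, β)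

/-- The quartic loss `h(x) = (x² - 1)² / 4`. -/
noncomputable def hq (x : ℝ) : ℝ := (x ^ 2 - 1) ^ 2 / 4

/-- The population loss `γ = (α, β) ↦ E g(α + β⊤X) + (λ/2) α²` built from a scalar loss `g`. -/
noncomputable def popLoss {d : ℕ} {Ω : Type*} [MeasurableSpace Ω] (P : Measure Ω)
    (X : Ω → Vec d) (g : ℝ → ℝ) (lam : ℝ) (γ : Pr d) : ℝ :=
  (∫ ω, g ((WithLp.equiv 2 (ℝ × Vec d) γ).1 + ⟪(WithLp.equiv 2 (ℝ × Vec d) γ).2, X ω⟫) ∂P)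
    + lam / 2 * ((WithLp.equiv 2 (ℝ × Vec d) γ).1) ^ 2


/-- The special direction `β^h = ((1 + 1/‖μ‖²)/(‖μ‖⁴ + 6‖μ‖² + M_Z))^{1/2} μ`. -/
noncomputable def betah {d : ℕ} (μ : Vec d) (MZ : ℝ) : Vec d :=
  Real.sqrt ((1 + 1 / ‖μ‖ ^ 2) / (‖μ‖ ^ 4 + 6 * ‖μ‖ ^ 2 + MZ)) • μ

lemma aux_quartic (c0 c1 c2 c3 c4 : ℝ) :
    iteratedDeriv 2 (fun t : ℝ => c0 + t * c1 + t ^ 2 * c2 + t ^ 3 * c3 + t ^ 4 * c4) 0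
      = 2 * c2 := by
  have hd : ∀ t : ℝ, HasDerivAt (fun t : ℝ => c0 + t * c1 + t ^ 2 * c2 + t ^ 3 * c3 + t ^ 4 * c4)
      (c1 + 2 * c2 * t + 3 * c3 * t ^ 2 + 4 * c4 * t ^ 3) t := by
    intro t
    have h : HasDerivAt (fun t : ℝ => c0 + t * c1 + t ^ 2 * c2 + t ^ 3 * c3 + t ^ 4 * c4)
        (0 + 1 * c1 + (2 * t ^ 1) * c2 + (3 * t ^ 2) * c3 + (4 * t ^ 3) * c4) t :=
      ((((hasDerivAt_const t c0).add ((hasDerivAt_id t).mul_const c1)).add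
        ((hasDerivAt_pow 2 t).mul_const c2)).add ((hasDerivAt_pow 3 t).mul_const c3)).add
        ((hasDerivAt_pow 4 t).mul_const c4)
    convert h using 1
    ring
  have hd2 : ∀ t : ℝ, HasDerivAt (fun t : ℝ => c1 + 2 * c2 * t + 3 * c3 * t ^ 2 + 4 * c4 * t ^ 3)
      (2 * c2 + 6 * c3 * t + 12 * c4 * t ^ 2) t := by
    intro t
    have h : HasDerivAt (fun t : ℝ => c1 + 2 * c2 * t + 3 * c3 * t ^ 2 + 4 * c4 * t ^ 3)
        (0 + 2 * c2 * 1 + 3 * c3 * (2 * t ^ 1) + 4 * c4 * (3 * t ^ 2)) t :=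
      (((hasDerivAt_const t c1).add ((hasDerivAt_id t).const_mul (2 * c2))).add
        ((hasDerivAt_pow 2 t).const_mul (3 * c3))).add ((hasDerivAt_pow 3 t).const_mul (4 * c4))
    convert h using 1
    ring
  rw [iteratedDeriv_succ, iteratedDeriv_one]
  have e1 : deriv (fun t : ℝ => c0 + t * c1 + t ^ 2 * c2 + t ^ 3 * c3 + t ^ 4 * c4)
      = fun t : ℝ => c1 + 2 * c2 * t + 3 * c3 * t ^ 2 + 4 * c4 * t ^ 3 :=
    funext fun t => (hd t).deriv
  rw [e1, (hd2 0).deriv]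
  ring

lemma aux_pow_add_le (x y : ℝ) (hx : 0 ≤ x) (hy : 0 ≤ y) (k : ℕ) :
    (x + y) ^ k ≤ 2 ^ k * (x ^ k + y ^ k) := by
  rcases le_total x y with h | h
  · calc (x + y) ^ k ≤ (2 * y) ^ k := by
          apply pow_le_pow_left₀ (by linarith) (by linarith)
      _ = 2 ^ k * y ^ k := mul_pow 2 y k
      _ ≤ 2 ^ k * (x ^ k + y ^ k) := by
          have := pow_nonneg hx k
          have h2 : (0:ℝ) ≤ 2 ^ k := by positivity
          nlinarith
  · calc (x + y) ^ k ≤ (2 * x) ^ k := by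
          apply pow_le_pow_left₀ (by linarith) (by linarith)
      _ = 2 ^ k * x ^ k := mul_pow 2 x k
      _ ≤ 2 ^ k * (x ^ k + y ^ k) := by
          have := pow_nonneg hy k
          have h2 : (0:ℝ) ≤ 2 ^ k := by positivity
          nlinarith

lemma aux_int_mul {Ω : Type*} [MeasurableSpace Ω] (P : Measure Ω) [IsProbabilityMeasure P]
    (f g : Ω → ℝ) (hf : AEStronglyMeasurable f P) (hg : AEStronglyMeasurable g P)
    (hf8 : Integrable (fun ω => |f ω| ^ (8:ℕ)) P)
    (hg8 : Integrable (fun ω => |g ω| ^ (8:ℕ)) P)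
    (n m : ℕ) (hn : n ≤ 4) (hm : m ≤ 4) :
    Integrable (fun ω => f ω ^ n * g ω ^ m) P := by
  have hint : Integrable (fun ω => 128 * (2 + (|f ω| ^ (8:ℕ) + |g ω| ^ (8:ℕ)))) P :=
    ((integrable_const (2:ℝ)).add (hf8.add hg8)).const_mul 128
  apply Integrable.mono hint ((hf.pow n).mul (hg.pow m))
  filter_upwards with ω
  set a := |f ω| with ha
  set b := |g ω| with hb
  have ha0 : 0 ≤ a := abs_nonneg _
  have hb0 : 0 ≤ b := abs_nonneg _
  have h1 : a ^ n ≤ (1 + a) ^ 4 :=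
    calc a ^ n ≤ (1 + a) ^ n := pow_le_pow_left₀ ha0 (by linarith) n
      _ ≤ (1 + a) ^ 4 := pow_le_pow_right₀ (by linarith) hn
  have h2 : b ^ m ≤ (1 + b) ^ 4 :=
    calc b ^ m ≤ (1 + b) ^ m := pow_le_pow_left₀ hb0 (by linarith) m
      _ ≤ (1 + b) ^ 4 := pow_le_pow_right₀ (by linarith) hm
  have h3 : (1 + a) ^ 8 ≤ 2 ^ 8 * (1 ^ 8 + a ^ 8) := aux_pow_add_le 1 a zero_le_one ha0 8
  have h4 : (1 + b) ^ 8 ≤ 2 ^ 8 * (1 ^ 8 + b ^ 8) := aux_pow_add_le 1 b zero_le_one hb0 8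
  have h5 : (1 + a) ^ 4 * (1 + b) ^ 4 ≤ ((1 + a) ^ 8 + (1 + b) ^ 8) / 2 := by
    nlinarith [sq_nonneg ((1 + a) ^ 4 - (1 + b) ^ 4)]
  have hnorm : ‖f ω ^ n * g ω ^ m‖ = a ^ n * b ^ m := by
    rw [Real.norm_eq_abs, abs_mul, abs_pow, abs_pow]
  show ‖f ω ^ n * g ω ^ m‖ ≤ ‖128 * (2 + (a ^ 8 + b ^ 8))‖
  rw [hnorm]
  have h6 : a ^ n * b ^ m ≤ (1 + a) ^ 4 * (1 + b) ^ 4 :=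
    mul_le_mul h1 h2 (pow_nonneg hb0 m) (by positivity)
  have hb8 : ‖128 * (2 + (|f ω| ^ (8:ℕ) + |g ω| ^ (8:ℕ)))‖ = 128 * (2 + (a ^ 8 + b ^ 8)) := by
    rw [Real.norm_eq_abs, abs_of_nonneg (by positivity)]
  rw [hb8]
  nlinarith

lemma aux_expand {Ω : Type*} [MeasurableSpace Ω] (P : Measure Ω) [IsProbabilityMeasure P]
    (a b : Ω → ℝ)
    (hi : ∀ j k : ℕ, j ≤ 4 → k ≤ 4 → Integrable (fun ω => a ω ^ j * b ω ^ k) P) (t : ℝ) :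
    ∫ ω, hq (a ω + t * b ω) ∂P
      = (∫ ω, hq (a ω) ∂P) + t * (∫ ω, a ω ^ 3 * b ω - a ω * b ω ∂P)
        + t ^ 2 * (∫ ω, (3 * (a ω ^ 2 * b ω ^ 2) - b ω ^ 2) / 2 ∂P)
        + t ^ 3 * (∫ ω, a ω * b ω ^ 3 ∂P) + t ^ 4 * (∫ ω, b ω ^ 4 / 4 ∂P) := by
  have h40 : Integrable (fun ω => a ω ^ 4) P := by simpa using hi 4 0
  have h20 : Integrable (fun ω => a ω ^ 2) P := by simpa using hi 2 0
  have h31 : Integrable (fun ω => a ω ^ 3 * b ω) P := by simpa using hi 3 1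
  have h11 : Integrable (fun ω => a ω * b ω) P := by simpa using hi 1 1
  have h22 : Integrable (fun ω => a ω ^ 2 * b ω ^ 2) P := hi 2 2 (by norm_num) (by norm_num)
  have h02 : Integrable (fun ω => b ω ^ 2) P := by simpa using hi 0 2
  have h13 : Integrable (fun ω => a ω * b ω ^ 3) P := by simpa using hi 1 3
  have h04 : Integrable (fun ω => b ω ^ 4) P := by simpa using hi 0 4
  have int0 : Integrable (fun ω => hq (a ω)) P := by
    have e : (fun ω => hq (a ω)) = fun ω => (a ω ^ 4 - 2 * a ω ^ 2 + 1) / 4 :=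
      funext fun ω => by simp only [hq]; ring
    rw [e]
    exact ((h40.sub (h20.const_mul 2)).add (integrable_const 1)).div_const 4
  have int1 : Integrable (fun ω => a ω ^ 3 * b ω - a ω * b ω) P := h31.sub h11
  have int2 : Integrable (fun ω => (3 * (a ω ^ 2 * b ω ^ 2) - b ω ^ 2) / 2) P :=
    ((h22.const_mul 3).sub h02).div_const 2
  have int4 : Integrable (fun ω => b ω ^ 4 / 4) P := h04.div_const 4
  have key : ∀ ω, hq (a ω + t * b ω)
      = hq (a ω) + t * (a ω ^ 3 * b ω - a ω * b ω)
        + t ^ 2 * ((3 * (a ω ^ 2 * b ω ^ 2) - b ω ^ 2) / 2)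
        + t ^ 3 * (a ω * b ω ^ 3) + t ^ 4 * (b ω ^ 4 / 4) := fun ω => by
    simp only [hq]; ring
  have I1 : Integrable (fun ω => t * (a ω ^ 3 * b ω - a ω * b ω)) P := int1.const_mul t
  have I2 : Integrable (fun ω => t ^ 2 * ((3 * (a ω ^ 2 * b ω ^ 2) - b ω ^ 2) / 2)) P :=
    int2.const_mul _
  have I3 : Integrable (fun ω => t ^ 3 * (a ω * b ω ^ 3)) P := h13.const_mul _
  have I4 : Integrable (fun ω => t ^ 4 * (b ω ^ 4 / 4)) P := int4.const_mul _
  have I01 : Integrable (fun ω => hq (a ω) + t * (a ω ^ 3 * b ω - a ω * b ω)) P := int0.add I1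
  have I012 : Integrable (fun ω => hq (a ω) + t * (a ω ^ 3 * b ω - a ω * b ω)
      + t ^ 2 * ((3 * (a ω ^ 2 * b ω ^ 2) - b ω ^ 2) / 2)) P := I01.add I2
  have I0123 : Integrable (fun ω => hq (a ω) + t * (a ω ^ 3 * b ω - a ω * b ω)
      + t ^ 2 * ((3 * (a ω ^ 2 * b ω ^ 2) - b ω ^ 2) / 2)
      + t ^ 3 * (a ω * b ω ^ 3)) P := I012.add I3
  simp only [key]
  rw [integral_add I0123 I4, integral_add I012 I3, integral_add I01 I2, integral_add int0 I1,
    integral_const_mul, integral_const_mul, integral_const_mul, integral_const_mul]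
lemma aux_intZ {d : ℕ} {Ω : Type*} [MeasurableSpace Ω] (P : Measure Ω) [IsProbabilityMeasure P]
    (Z : Ω → Vec d)
    (hZsg : ∀ u : Vec d, ‖u‖ = 1 → ∀ p : ℝ, 1 ≤ p → Integrable (fun ω => |⟪u, Z ω⟫| ^ p) P)
    (u : Vec d) (n : ℕ) : Integrable (fun ω => |⟪u, Z ω⟫| ^ n) P := by
  rcases Nat.eq_zero_or_pos n with h0 | hn
  · simp [h0]
  by_cases hu : u = 0
  · simp only [hu, inner_zero_left, abs_zero, zero_pow hn.ne']
    exact integrable_const 0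
  · set w : Vec d := ‖u‖⁻¹ • u with hwdef
    have hw : ‖w‖ = 1 := norm_smul_inv_norm hu
    have h1 := hZsg w hw n (by exact_mod_cast hn)
    have h2 : Integrable (fun ω => |⟪w, Z ω⟫| ^ n) P := by
      have e : (fun ω => |⟪w, Z ω⟫| ^ n) = fun ω => |⟪w, Z ω⟫| ^ (n : ℝ) :=
        funext fun ω => (Real.rpow_natCast _ n).symm
      rw [e]; exact h1
    have key : (fun ω => |⟪u, Z ω⟫| ^ n) = fun ω => ‖u‖ ^ n * |⟪w, Z ω⟫| ^ n := by
      funext ω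
      have hinner : ⟪u, Z ω⟫ = ‖u‖ * ⟪w, Z ω⟫ := by
        rw [hwdef,  real_inner_smul_left]
        have : ‖u‖ ≠ 0 := norm_ne_zero_iff.mpr hu
        field_simp
      rw [hinner, abs_mul, mul_pow, abs_of_nonneg (norm_nonneg u)]
    rw [key]
    exact h2.const_mul _

lemma aux_EZ4 {d : ℕ} {Ω : Type*} [MeasurableSpace Ω] (P : Measure Ω) [IsProbabilityMeasure P]
    (Z : Ω → Vec d) (MZ : ℝ)
    (hMZ : ∀ u : Vec d, ‖u‖ = 1 → (∫ ω, ⟪u, Z ω⟫ ^ 4 ∂P) = MZ)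
    (w : Vec d) : ∫ ω, ⟪w, Z ω⟫ ^ 4 ∂P = MZ * ‖w‖ ^ 4 := by
  by_cases hw : w = 0
  · simp [hw]
  · have hu : ‖(‖w‖⁻¹ • w : Vec d)‖ = 1 := norm_smul_inv_norm hw
    have h := hMZ _ hu
    have hn : ‖w‖ ≠ 0 := norm_ne_zero_iff.mpr hw
    have e : (fun ω => ⟪(‖w‖⁻¹ • w : Vec d), Z ω⟫ ^ 4) = fun ω => ‖w‖⁻¹ ^ 4 * ⟪w, Z ω⟫ ^ 4 :=
      funext fun ω => by rw [real_inner_smul_left]; ring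
    rw [e, integral_const_mul] at h
    set I := ∫ ω, ⟪w, Z ω⟫ ^ 4 ∂P with hI
    field_simp at h
    linarith

lemma aux_pair {d : ℕ} {Ω : Type*} [MeasurableSpace Ω] (P : Measure Ω) [IsProbabilityMeasure P]
    (Z : Ω → Vec d) (MZ : ℝ)
    (hMZ : ∀ u : Vec d, ‖u‖ = 1 → (∫ ω, ⟪u, Z ω⟫ ^ 4 ∂P) = MZ)
    (hint : ∀ (u v : Vec d) (n m : ℕ), n ≤ 4 → m ≤ 4 →
      Integrable (fun ω => ⟪u, Z ω⟫ ^ n * ⟪v, Z ω⟫ ^ m) P)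
    (u e : Vec d) (hu : ‖u‖ = 1) (he : ‖e‖ = 1) (hue : ⟪u, e⟫ = 0) :
    (∫ ω, ⟪u, Z ω⟫ ^ 3 * ⟪e, Z ω⟫ ∂P) = 0 ∧
    (∫ ω, ⟪u, Z ω⟫ ^ 2 * ⟪e, Z ω⟫ ^ 2 ∂P) = MZ / 3 ∧
    (∫ ω, ⟪u, Z ω⟫ * ⟪e, Z ω⟫ ^ 3 ∂P) = 0 := by
  set a1 := ∫ ω, ⟪u, Z ω⟫ ^ 3 * ⟪e, Z ω⟫ ∂P with ha1
  set a2 := ∫ ω, ⟪u, Z ω⟫ ^ 2 * ⟪e, Z ω⟫ ^ 2 ∂P with ha2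
  set a3 := ∫ ω, ⟪u, Z ω⟫ * ⟪e, Z ω⟫ ^ 3 ∂P with ha3
  have iA4 : Integrable (fun ω => ⟪u, Z ω⟫ ^ 4) P := by simpa using hint u e 4 0 (le_refl 4) (by norm_num)
  have iE4 : Integrable (fun ω => ⟪e, Z ω⟫ ^ 4) P := by simpa using hint u e 0 4 (by norm_num) (le_refl 4)
  have iA3E : Integrable (fun ω => ⟪u, Z ω⟫ ^ 3 * ⟪e, Z ω⟫) P := by
    simpa using hint u e 3 1 (by norm_num) (by norm_num)
  have iA2E2 : Integrable (fun ω => ⟪u, Z ω⟫ ^ 2 * ⟪e, Z ω⟫ ^ 2) P :=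
    hint u e 2 2 (by norm_num) (by norm_num)
  have iAE3 : Integrable (fun ω => ⟪u, Z ω⟫ * ⟪e, Z ω⟫ ^ 3) P := by
    simpa using hint u e 1 3 (by norm_num) (by norm_num)
  have hEA4 : ∫ ω, ⟪u, Z ω⟫ ^ 4 ∂P = MZ := by
    rw [aux_EZ4 P Z MZ hMZ u, hu]; ring
  have hEE4 : ∫ ω, ⟪e, Z ω⟫ ^ 4 ∂P = MZ := by
    rw [aux_EZ4 P Z MZ hMZ e, he]; ring
  have expand4 : ∀ c : ℝ, MZ * (1 + c ^ 2) ^ 2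
      = MZ + c * (4 * a1) + c ^ 2 * (6 * a2) + c ^ 3 * (4 * a3) + c ^ 4 * MZ := by
    intro c
    have hnorm : ‖u + c • e‖ ^ 2 = 1 + c ^ 2 := by
      rw [norm_add_sq_real, real_inner_smul_right, hue, norm_smul, mul_pow, hu, he]
      simp [sq_abs]
    have hlhs : ∫ ω, ⟪u + c • e, Z ω⟫ ^ 4 ∂P = MZ * (1 + c ^ 2) ^ 2 := by
      rw [aux_EZ4 P Z MZ hMZ (u + c • e)]
      congr 1
      rw [show ‖u + c • e‖ ^ 4 = (‖u + c • e‖ ^ 2) ^ 2 by ring, hnorm]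
    have key : ∀ ω, ⟪u + c • e, Z ω⟫ ^ 4
        = ⟪u, Z ω⟫ ^ 4 + c * (4 * (⟪u, Z ω⟫ ^ 3 * ⟪e, Z ω⟫))
          + c ^ 2 * (6 * (⟪u, Z ω⟫ ^ 2 * ⟪e, Z ω⟫ ^ 2))
          + c ^ 3 * (4 * (⟪u, Z ω⟫ * ⟪e, Z ω⟫ ^ 3)) + c ^ 4 * ⟪e, Z ω⟫ ^ 4 := by
      intro ω
      rw [inner_add_left, real_inner_smul_left]
      ring
    have J1 : Integrable (fun ω => c * (4 * (⟪u, Z ω⟫ ^ 3 * ⟪e, Z ω⟫))) P :=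
      (iA3E.const_mul 4).const_mul c
    have J2 : Integrable (fun ω => c ^ 2 * (6 * (⟪u, Z ω⟫ ^ 2 * ⟪e, Z ω⟫ ^ 2))) P :=
      (iA2E2.const_mul 6).const_mul _
    have J3 : Integrable (fun ω => c ^ 3 * (4 * (⟪u, Z ω⟫ * ⟪e, Z ω⟫ ^ 3))) P :=
      (iAE3.const_mul 4).const_mul _
    have J4 : Integrable (fun ω => c ^ 4 * ⟪e, Z ω⟫ ^ 4) P := iE4.const_mul _
    have I01 : Integrable (fun ω => ⟪u, Z ω⟫ ^ 4 + c * (4 * (⟪u, Z ω⟫ ^ 3 * ⟪e, Z ω⟫))) P :=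
      iA4.add J1
    have I012 : Integrable (fun ω => ⟪u, Z ω⟫ ^ 4 + c * (4 * (⟪u, Z ω⟫ ^ 3 * ⟪e, Z ω⟫))
        + c ^ 2 * (6 * (⟪u, Z ω⟫ ^ 2 * ⟪e, Z ω⟫ ^ 2))) P := I01.add J2
    have I0123 : Integrable (fun ω => ⟪u, Z ω⟫ ^ 4 + c * (4 * (⟪u, Z ω⟫ ^ 3 * ⟪e, Z ω⟫))
        + c ^ 2 * (6 * (⟪u, Z ω⟫ ^ 2 * ⟪e, Z ω⟫ ^ 2))
        + c ^ 3 * (4 * (⟪u, Z ω⟫ * ⟪e, Z ω⟫ ^ 3))) P := I012.add J3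
    rw [← hlhs]
    simp only [key]
    rw [integral_add I0123 J4, integral_add I012 J3, integral_add I01 J2, integral_add iA4 J1,
      integral_const_mul, integral_const_mul, integral_const_mul, integral_const_mul,
      integral_const_mul, integral_const_mul, integral_const_mul, hEA4, hEE4, ← ha1, ← ha2, ← ha3]
  have e1 := expand4 1
  have e2 := expand4 (-1)
  have e3 := expand4 2
  norm_num at e1 e2 e3
  refine ⟨by linarith, by linarith, by linarith⟩

lemma aux_EZ22u {d : ℕ} {Ω : Type*} [MeasurableSpace Ω] (P : Measure Ω) [IsProbabilityMeasure P]
    (Z : Ω → Vec d) (MZ : ℝ)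
    (hMZ : ∀ u : Vec d, ‖u‖ = 1 → (∫ ω, ⟪u, Z ω⟫ ^ 4 ∂P) = MZ)
    (hint : ∀ (u v : Vec d) (n m : ℕ), n ≤ 4 → m ≤ 4 →
      Integrable (fun ω => ⟪u, Z ω⟫ ^ n * ⟪v, Z ω⟫ ^ m) P)
    (u : Vec d) (hu : ‖u‖ = 1) (v : Vec d) :
    ∫ ω, ⟪u, Z ω⟫ ^ 2 * ⟪v, Z ω⟫ ^ 2 ∂P = MZ / 3 * (‖v‖ ^ 2 + 2 * ⟪u, v⟫ ^ 2) := by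
  set α := ⟪u, v⟫ with hα
  set w : Vec d := v - α • u with hw
  have huu : ⟪u, u⟫ = 1 := by
    rw [real_inner_self_eq_norm_sq, hu]; norm_num
  have hworth : ⟪u, w⟫ = 0 := by
    rw [hw, inner_sub_right, real_inner_smul_right, huu]; ring
  have hv : v = α • u + w := by rw [hw]; abel
  have hnv : ‖v‖ ^ 2 = α ^ 2 + ‖w‖ ^ 2 := by
    rw [hv, norm_add_sq_real, real_inner_smul_left, hworth, norm_smul, mul_pow, hu]
    simp [sq_abs]
  by_cases hw0 : w = 0
  · have hB : ∀ ω, ⟪v, Z ω⟫ = α * ⟪u, Z ω⟫ := by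
      intro ω
      rw [hv, hw0, add_zero, real_inner_smul_left]
    have key : ∀ ω, ⟪u, Z ω⟫ ^ 2 * ⟪v, Z ω⟫ ^ 2 = α ^ 2 * ⟪u, Z ω⟫ ^ 4 := by
      intro ω; rw [hB]; ring
    simp only [key]
    rw [integral_const_mul, aux_EZ4 P Z MZ hMZ u, hu]
    have : ‖w‖ ^ 2 = 0 := by rw [hw0]; simp
    rw [hnv, this]
    ring
  · set e : Vec d := ‖w‖⁻¹ • w with he
    have hne : ‖e‖ = 1 := norm_smul_inv_norm hw0
    have hwn : ‖w‖ ≠ 0 := norm_ne_zero_iff.mpr hw0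
    have hue : ⟪u, e⟫ = 0 := by
      rw [he, real_inner_smul_right, hworth]; ring
    obtain ⟨p1, p2, p3⟩ := aux_pair P Z MZ hMZ hint u e hu hne hue
    have hB : ∀ ω, ⟪v, Z ω⟫ = α * ⟪u, Z ω⟫ + ‖w‖ * ⟪e, Z ω⟫ := by
      intro ω
      have hwZ : ⟪w, Z ω⟫ = ‖w‖ * ⟪e, Z ω⟫ := by
        rw [he, real_inner_smul_left]
        field_simp
      rw [hv, inner_add_left, real_inner_smul_left, hwZ]
    have key : ∀ ω, ⟪u, Z ω⟫ ^ 2 * ⟪v, Z ω⟫ ^ 2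
        = α ^ 2 * ⟪u, Z ω⟫ ^ 4 + (2 * α * ‖w‖) * (⟪u, Z ω⟫ ^ 3 * ⟪e, Z ω⟫)
          + ‖w‖ ^ 2 * (⟪u, Z ω⟫ ^ 2 * ⟪e, Z ω⟫ ^ 2) := by
      intro ω; rw [hB]; ring
    have iA4 : Integrable (fun ω => ⟪u, Z ω⟫ ^ 4) P := by
      simpa using hint u e 4 0 (le_refl 4) (by norm_num)
    have iA3E : Integrable (fun ω => ⟪u, Z ω⟫ ^ 3 * ⟪e, Z ω⟫) P := by
      simpa using hint u e 3 1 (by norm_num) (by norm_num)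
    have iA2E2 : Integrable (fun ω => ⟪u, Z ω⟫ ^ 2 * ⟪e, Z ω⟫ ^ 2) P :=
      hint u e 2 2 (by norm_num) (by norm_num)
    have J0 : Integrable (fun ω => α ^ 2 * ⟪u, Z ω⟫ ^ 4) P := iA4.const_mul _
    have J1 : Integrable (fun ω => (2 * α * ‖w‖) * (⟪u, Z ω⟫ ^ 3 * ⟪e, Z ω⟫)) P :=
      iA3E.const_mul _
    have J2 : Integrable (fun ω => ‖w‖ ^ 2 * (⟪u, Z ω⟫ ^ 2 * ⟪e, Z ω⟫ ^ 2)) P :=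
      iA2E2.const_mul _
    have I01 : Integrable (fun ω => α ^ 2 * ⟪u, Z ω⟫ ^ 4
        + (2 * α * ‖w‖) * (⟪u, Z ω⟫ ^ 3 * ⟪e, Z ω⟫)) P := J0.add J1
    simp only [key]
    rw [integral_add I01 J2, integral_add J0 J1, integral_const_mul, integral_const_mul,
      integral_const_mul, aux_EZ4 P Z MZ hMZ u, hu, p1, p2, hnv]
    ring

lemma aux_EZ22 {d : ℕ} {Ω : Type*} [MeasurableSpace Ω] (P : Measure Ω) [IsProbabilityMeasure P]
    (Z : Ω → Vec d) (MZ : ℝ)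
    (hMZ : ∀ u : Vec d, ‖u‖ = 1 → (∫ ω, ⟪u, Z ω⟫ ^ 4 ∂P) = MZ)
    (hint : ∀ (u v : Vec d) (n m : ℕ), n ≤ 4 → m ≤ 4 →
      Integrable (fun ω => ⟪u, Z ω⟫ ^ n * ⟪v, Z ω⟫ ^ m) P)
    (u v : Vec d) :
    ∫ ω, ⟪u, Z ω⟫ ^ 2 * ⟪v, Z ω⟫ ^ 2 ∂P
      = MZ / 3 * (‖u‖ ^ 2 * ‖v‖ ^ 2 + 2 * ⟪u, v⟫ ^ 2) := by
  by_cases hu : u = 0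
  · simp [hu]
  · have hn : ‖u‖ ≠ 0 := norm_ne_zero_iff.mpr hu
    have h := aux_EZ22u P Z MZ hMZ hint (‖u‖⁻¹ • u) (norm_smul_inv_norm hu) v
    have key : ∀ ω, ⟪(‖u‖⁻¹ • u : Vec d), Z ω⟫ ^ 2 * ⟪v, Z ω⟫ ^ 2
        = ‖u‖⁻¹ ^ 2 * (⟪u, Z ω⟫ ^ 2 * ⟪v, Z ω⟫ ^ 2) := by
      intro ω; rw [real_inner_smul_left]; ring
    rw [show ⟪(‖u‖⁻¹ • u : Vec d), v⟫ = ‖u‖⁻¹ * ⟪u, v⟫ from real_inner_smul_left u v _] at h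
    simp only [key] at h
    rw [integral_const_mul] at h
    set I := ∫ ω, ⟪u, Z ω⟫ ^ 2 * ⟪v, Z ω⟫ ^ 2 ∂P with hI
    set q : ℝ := ⟪u, v⟫ with hqd
    field_simp at h ⊢
    have h2 : I * 3 * ‖u‖ ^ 2 = MZ * (‖u‖ ^ 2 * ‖v‖ ^ 2 + 2 * q ^ 2) * ‖u‖ ^ 2 := by
      linear_combination ‖u‖ ^ 2 * h
    exact mul_right_cancel₀ (pow_ne_zero 2 hn) h2

lemma aux_EY {Ω : Type*} [MeasurableSpace Ω] (P : Measure Ω) [IsProbabilityMeasure P]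
    (Y : Ω → ℝ) (hY : Measurable Y) (hYpm : ∀ ω, Y ω = 1 ∨ Y ω = -1)
    (hY1 : P {ω | Y ω = 1} = 1 / 2) : ∫ ω, Y ω ∂P = 0 := by
  have hs : MeasurableSet {ω | Y ω = 1} := hY (measurableSet_singleton 1)
  have hrep : Y = fun ω => Set.indicator {ω | Y ω = 1} (fun _ => (2:ℝ)) ω - 1 := by
    funext ω
    rcases hYpm ω with h | h
    · rw [Set.indicator_of_mem (show ω ∈ {ω | Y ω = 1} from h), h]; norm_num
    · rw [Set.indicator_of_notMem (show ω ∉ {ω | Y ω = 1} by simp only [Set.mem_setOf_eq, h]; norm_num), h]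
      norm_num
  rw [hrep, integral_sub ((integrable_const (2:ℝ)).indicator hs) (integrable_const 1),
    integral_indicator_const _ hs, measureReal_def, hY1, integral_const]
  simp [measure_univ]

section Model

variable {d : ℕ} {Ω : Type*} [MeasurableSpace Ω] (P : Measure Ω) [IsProbabilityMeasure P]
  (Y : Ω → ℝ) (Z : Ω → Vec d) (X : Ω → Vec d) (μ : Vec d) (MZ : ℝ)

lemma aux_H
    (hY : Measurable Y) (hZ : Measurable Z)
    (hYpm : ∀ ω, Y ω = 1 ∨ Y ω = -1)
    (hY1 : P {ω | Y ω = 1} = 1 / 2)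
    (hindep : IndepFun Y Z P)
    (hZcov : ∀ u v : Vec d, (∫ ω, ⟪u, Z ω⟫ * ⟪v, Z ω⟫ ∂P) = ⟪u, v⟫)
    (hMZ : ∀ u : Vec d, ‖u‖ = 1 → (∫ ω, ⟪u, Z ω⟫ ^ 4 ∂P) = MZ)
    (hX : ∀ ω, X ω = Y ω • μ + Z ω)
    (hint : ∀ (u v : Vec d) (n m : ℕ), n ≤ 4 → m ≤ 4 →
      Integrable (fun ω => ⟪u, Z ω⟫ ^ n * ⟪v, Z ω⟫ ^ m) P)
    (β v : Vec d) :
    ∫ ω, (3 * (⟪β, X ω⟫ ^ 2 * ⟪v, X ω⟫ ^ 2) - ⟪v, X ω⟫ ^ 2) ∂P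
      = 3 * ⟪β, μ⟫ ^ 2 * ⟪v, μ⟫ ^ 2 + (3 * ⟪β, μ⟫ ^ 2 - 1) * ‖v‖ ^ 2
        + 3 * ⟪v, μ⟫ ^ 2 * ‖β‖ ^ 2 + MZ * (‖β‖ ^ 2 * ‖v‖ ^ 2 + 2 * ⟪β, v⟫ ^ 2)
        + 12 * ⟪β, μ⟫ * ⟪v, μ⟫ * ⟪β, v⟫ - ⟪v, μ⟫ ^ 2 := by
  set p : ℝ := ⟪β, μ⟫ with hp
  set q : ℝ := ⟪v, μ⟫ with hqd
  have hax : ∀ ω, ⟪β, X ω⟫ = Y ω * p + ⟪β, Z ω⟫ := fun ω => by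
    rw [hX ω, inner_add_right, real_inner_smul_right]
  have hbx : ∀ ω, ⟪v, X ω⟫ = Y ω * q + ⟪v, Z ω⟫ := fun ω => by
    rw [hX ω, inner_add_right, real_inner_smul_right]
  set G : Vec d → ℝ := fun z =>
    6 * q * ⟪v, z⟫ * (p ^ 2 + ⟪β, z⟫ ^ 2) + 6 * p * ⟪β, z⟫ * (q ^ 2 + ⟪v, z⟫ ^ 2)
      - 2 * q * ⟪v, z⟫ with hG
  have hmb : Measurable fun z : Vec d => ⟪β, z⟫ := measurable_const.inner measurable_id
  have hmv : Measurable fun z : Vec d => ⟪v, z⟫ := measurable_const.inner measurable_id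
  have hGm : Measurable G := by
    apply Measurable.sub
    · apply Measurable.add
      · exact ((measurable_const.mul hmv).mul ((measurable_const.add (hmb.pow_const 2))))
      · exact ((measurable_const.mul hmb).mul ((measurable_const.add (hmv.pow_const 2))))
    · exact measurable_const.mul hmv
  have key : ∀ ω, 3 * (⟪β, X ω⟫ ^ 2 * ⟪v, X ω⟫ ^ 2) - ⟪v, X ω⟫ ^ 2
      = (3 * (p ^ 2 * q ^ 2) - q ^ 2) + (3 * p ^ 2 - 1) * ⟪v, Z ω⟫ ^ 2
        + (3 * q ^ 2) * ⟪β, Z ω⟫ ^ 2 + 3 * (⟪β, Z ω⟫ ^ 2 * ⟪v, Z ω⟫ ^ 2)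
        + (12 * (p * q)) * (⟪β, Z ω⟫ * ⟪v, Z ω⟫) + Y ω * G (Z ω) := by
    intro ω
    rw [hax, hbx]
    rcases hYpm ω with h | h <;> rw [h] <;> simp only [hG] <;> ring
  have iB2 : Integrable (fun ω => ⟪v, Z ω⟫ ^ 2) P := by
    simpa using hint v v 2 0 (by norm_num) (by norm_num)
  have iA2 : Integrable (fun ω => ⟪β, Z ω⟫ ^ 2) P := by
    simpa using hint β β 2 0 (by norm_num) (by norm_num)
  have iA2B2 : Integrable (fun ω => ⟪β, Z ω⟫ ^ 2 * ⟪v, Z ω⟫ ^ 2) P :=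
    hint β v 2 2 (by norm_num) (by norm_num)
  have iAB : Integrable (fun ω => ⟪β, Z ω⟫ * ⟪v, Z ω⟫) P := by
    simpa using hint β v 1 1 (by norm_num) (by norm_num)
  have iB : Integrable (fun ω => ⟪v, Z ω⟫) P := by
    simpa using hint v v 1 0 (by norm_num) (by norm_num)
  have iA : Integrable (fun ω => ⟪β, Z ω⟫) P := by
    simpa using hint β β 1 0 (by norm_num) (by norm_num)
  have iA2B : Integrable (fun ω => ⟪β, Z ω⟫ ^ 2 * ⟪v, Z ω⟫) P := by
    simpa using hint β v 2 1 (by norm_num) (by norm_num)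
  have iAB2 : Integrable (fun ω => ⟪β, Z ω⟫ * ⟪v, Z ω⟫ ^ 2) P := by
    simpa using hint β v 1 2 (by norm_num) (by norm_num)
  have hGeq : (fun ω => G (Z ω)) = fun ω =>
      (6 * q * p ^ 2 - 2 * q) * ⟪v, Z ω⟫ + (6 * q) * (⟪β, Z ω⟫ ^ 2 * ⟪v, Z ω⟫)
        + (6 * p * q ^ 2) * ⟪β, Z ω⟫ + (6 * p) * (⟪β, Z ω⟫ * ⟪v, Z ω⟫ ^ 2) :=
    funext fun ω => by simp only [hG]; ring
  have iG : Integrable (fun ω => G (Z ω)) P := by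
    rw [hGeq]
    exact (((iB.const_mul _).add (iA2B.const_mul _)).add (iA.const_mul _)).add
      (iAB2.const_mul _)
  have iYG : Integrable (fun ω => Y ω * G (Z ω)) P := by
    apply Integrable.mono iG.abs ((hY.mul (hGm.comp hZ)).aestronglyMeasurable)
    filter_upwards with ω
    rcases hYpm ω with h | h <;>
      simp [Real.norm_eq_abs, abs_mul, h]
  have EYG : ∫ ω, Y ω * G (Z ω) ∂P = 0 := by
    have hind2 : IndepFun Y (fun ω => G (Z ω)) P := hindep.comp measurable_id hGm
    rw [hind2.integral_fun_mul_eq_mul_integral hY.aestronglyMeasurable (hGm.comp hZ).aestronglyMeasurable,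
      aux_EY P Y hY hYpm hY1, zero_mul]
  have EB2 : ∫ ω, ⟪v, Z ω⟫ ^ 2 ∂P = ‖v‖ ^ 2 := by
    have e : (fun ω => ⟪v, Z ω⟫ ^ 2) = fun ω => ⟪v, Z ω⟫ * ⟪v, Z ω⟫ :=
      funext fun ω => sq ⟪v, Z ω⟫
    rw [e, hZcov v v, real_inner_self_eq_norm_sq]
  have EA2 : ∫ ω, ⟪β, Z ω⟫ ^ 2 ∂P = ‖β‖ ^ 2 := by
    have e : (fun ω => ⟪β, Z ω⟫ ^ 2) = fun ω => ⟪β, Z ω⟫ * ⟪β, Z ω⟫ :=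
      funext fun ω => sq ⟪β, Z ω⟫
    rw [e, hZcov β β, real_inner_self_eq_norm_sq]
  have EA2B2 : ∫ ω, ⟪β, Z ω⟫ ^ 2 * ⟪v, Z ω⟫ ^ 2 ∂P
      = MZ / 3 * (‖β‖ ^ 2 * ‖v‖ ^ 2 + 2 * ⟪β, v⟫ ^ 2) := aux_EZ22 P Z MZ hMZ hint β v
  have J1 : Integrable (fun ω => (3 * p ^ 2 - 1) * ⟪v, Z ω⟫ ^ 2) P := iB2.const_mul _
  have J2 : Integrable (fun ω => (3 * q ^ 2) * ⟪β, Z ω⟫ ^ 2) P := iA2.const_mul _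
  have J3 : Integrable (fun ω => 3 * (⟪β, Z ω⟫ ^ 2 * ⟪v, Z ω⟫ ^ 2)) P := iA2B2.const_mul _
  have J4 : Integrable (fun ω => (12 * (p * q)) * (⟪β, Z ω⟫ * ⟪v, Z ω⟫)) P := iAB.const_mul _
  have I0 : Integrable (fun ω => (3 * (p ^ 2 * q ^ 2) - q ^ 2)
      + (3 * p ^ 2 - 1) * ⟪v, Z ω⟫ ^ 2) P := (integrable_const _).add J1
  have I1 : Integrable (fun ω => (3 * (p ^ 2 * q ^ 2) - q ^ 2)
      + (3 * p ^ 2 - 1) * ⟪v, Z ω⟫ ^ 2 + (3 * q ^ 2) * ⟪β, Z ω⟫ ^ 2) P := I0.add J2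
  have I2 : Integrable (fun ω => (3 * (p ^ 2 * q ^ 2) - q ^ 2)
      + (3 * p ^ 2 - 1) * ⟪v, Z ω⟫ ^ 2 + (3 * q ^ 2) * ⟪β, Z ω⟫ ^ 2
      + 3 * (⟪β, Z ω⟫ ^ 2 * ⟪v, Z ω⟫ ^ 2)) P := I1.add J3
  have I3 : Integrable (fun ω => (3 * (p ^ 2 * q ^ 2) - q ^ 2)
      + (3 * p ^ 2 - 1) * ⟪v, Z ω⟫ ^ 2 + (3 * q ^ 2) * ⟪β, Z ω⟫ ^ 2
      + 3 * (⟪β, Z ω⟫ ^ 2 * ⟪v, Z ω⟫ ^ 2)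
      + (12 * (p * q)) * (⟪β, Z ω⟫ * ⟪v, Z ω⟫)) P := I2.add J4
  simp only [key]
  rw [integral_add I3 iYG, integral_add I2 J4, integral_add I1 J3, integral_add I0 J2,
    integral_add (integrable_const _) J1, integral_const, integral_const_mul, integral_const_mul,
    integral_const_mul, integral_const_mul, EB2, EA2, EA2B2, hZcov β v, EYG]
  simp [measure_univ]
  ring

lemma aux_Halpha
    (hY : Measurable Y) (hZ : Measurable Z)
    (hYpm : ∀ ω, Y ω = 1 ∨ Y ω = -1)
    (hY1 : P {ω | Y ω = 1} = 1 / 2)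
    (hindep : IndepFun Y Z P)
    (hZcov : ∀ u v : Vec d, (∫ ω, ⟪u, Z ω⟫ * ⟪v, Z ω⟫ ∂P) = ⟪u, v⟫)
    (hX : ∀ ω, X ω = Y ω • μ + Z ω)
    (hint : ∀ (u v : Vec d) (n m : ℕ), n ≤ 4 → m ≤ 4 →
      Integrable (fun ω => ⟪u, Z ω⟫ ^ n * ⟪v, Z ω⟫ ^ m) P)
    (β : Vec d) :
    ∫ ω, (3 * ⟪β, X ω⟫ ^ 2 - 1) ∂P = 3 * ⟪β, μ⟫ ^ 2 + 3 * ‖β‖ ^ 2 - 1 := by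
  set p : ℝ := ⟪β, μ⟫ with hp
  have hax : ∀ ω, ⟪β, X ω⟫ = Y ω * p + ⟪β, Z ω⟫ := fun ω => by
    rw [hX ω, inner_add_right, real_inner_smul_right]
  set G : Vec d → ℝ := fun z => 6 * p * ⟪β, z⟫ with hG
  have hmb : Measurable fun z : Vec d => ⟪β, z⟫ := measurable_const.inner measurable_id
  have hGm : Measurable G := measurable_const.mul hmb
  have key : ∀ ω, 3 * ⟪β, X ω⟫ ^ 2 - 1
      = (3 * p ^ 2 - 1) + 3 * ⟪β, Z ω⟫ ^ 2 + Y ω * G (Z ω) := by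
    intro ω
    rw [hax]
    rcases hYpm ω with h | h <;> rw [h] <;> simp only [hG] <;> ring
  have iA2 : Integrable (fun ω => ⟪β, Z ω⟫ ^ 2) P := by
    simpa using hint β β 2 0 (by norm_num) (by norm_num)
  have iA : Integrable (fun ω => ⟪β, Z ω⟫) P := by
    simpa using hint β β 1 0 (by norm_num) (by norm_num)
  have iG : Integrable (fun ω => G (Z ω)) P := by
    simp only [hG]
    exact iA.const_mul _
  have iYG : Integrable (fun ω => Y ω * G (Z ω)) P := by
    apply Integrable.mono iG.abs ((hY.mul (hGm.comp hZ)).aestronglyMeasurable)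
    filter_upwards with ω
    rcases hYpm ω with h | h <;> simp [Real.norm_eq_abs, abs_mul, h]
  have EYG : ∫ ω, Y ω * G (Z ω) ∂P = 0 := by
    have hind2 : IndepFun Y (fun ω => G (Z ω)) P := hindep.comp measurable_id hGm
    rw [hind2.integral_fun_mul_eq_mul_integral hY.aestronglyMeasurable (hGm.comp hZ).aestronglyMeasurable,
      aux_EY P Y hY hYpm hY1, zero_mul]
  have EA2 : ∫ ω, ⟪β, Z ω⟫ ^ 2 ∂P = ‖β‖ ^ 2 := by
    have e : (fun ω => ⟪β, Z ω⟫ ^ 2) = fun ω => ⟪β, Z ω⟫ * ⟪β, Z ω⟫ :=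
      funext fun ω => sq ⟪β, Z ω⟫
    rw [e, hZcov β β, real_inner_self_eq_norm_sq]
  have J1 : Integrable (fun ω => 3 * ⟪β, Z ω⟫ ^ 2) P := iA2.const_mul _
  have I0 : Integrable (fun ω => (3 * p ^ 2 - 1) + 3 * ⟪β, Z ω⟫ ^ 2) P :=
    (integrable_const _).add J1
  simp only [key]
  rw [integral_add I0 iYG, integral_add (integrable_const _) J1, integral_const,
    integral_const_mul, EA2, EYG]
  simp [measure_univ]
  ring

end Model


lemma aux_ineq (m MZ S Q V : ℝ) (hm : 0 < m) (hMZ3 : 3 < MZ)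
    (hS : S * (m * (m ^ 2 + 6 * m + MZ)) = m + 1) :
    (2 * m ^ 2 + (MZ - 3) * m) / (m ^ 2 + 6 * m + MZ) * V
      ≤ (3 * (S * m ^ 2) - 1 + S * m * MZ) * V
        + (3 * S * m ^ 2 + 15 * S * m + 2 * S * MZ - 1) * Q ^ 2 := by
  have hD : 0 < m ^ 2 + 6 * m + MZ := by nlinarith
  have hcoefV : (2 * m ^ 2 + (MZ - 3) * m) / (m ^ 2 + 6 * m + MZ)
      = 3 * (S * m ^ 2) - 1 + S * m * MZ := by
    rw [div_eq_iff hD.ne']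
    linear_combination (-(3 * m + MZ)) * hS
  rw [hcoefV]
  have h1 : (3 * S * m ^ 2 + 15 * S * m + 2 * S * MZ - 1) * (m * (m ^ 2 + 6 * m + MZ))
      = 2 * m ^ 3 + 12 * m ^ 2 + 15 * m + m * MZ + 2 * MZ := by
    linear_combination (3 * m ^ 2 + 15 * m + 2 * MZ) * hS
  have h2 : (0:ℝ) < 2 * m ^ 3 + 12 * m ^ 2 + 15 * m + m * MZ + 2 * MZ := by nlinarith
  have h3 : 0 < m * (m ^ 2 + 6 * m + MZ) := mul_pos hm hD
  have hQcoef : 0 ≤ 3 * S * m ^ 2 + 15 * S * m + 2 * S * MZ - 1 := by nlinarith [h1, h2, h3]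
  nlinarith [mul_nonneg hQcoef (sq_nonneg Q)]

lemma aux_main {d : ℕ} {Ω : Type*} [MeasurableSpace Ω] (P : Measure Ω) [IsProbabilityMeasure P]
    (Y : Ω → ℝ) (Z : Ω → Vec d) (X : Ω → Vec d) (μ : Vec d) (MZ lam : ℝ)
    (hμ : μ ≠ 0)
    (hY : Measurable Y) (hZ : Measurable Z)
    (hYpm : ∀ ω, Y ω = 1 ∨ Y ω = -1)
    (hY1 : P {ω | Y ω = 1} = 1 / 2)
    (hindep : IndepFun Y Z P)
    (hZsg : ∀ u : Vec d, ‖u‖ = 1 → ∀ p : ℝ, 1 ≤ p → Integrable (fun ω => |⟪u, Z ω⟫| ^ p) P)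
    (hZcov : ∀ u v : Vec d, (∫ ω, ⟪u, Z ω⟫ * ⟪v, Z ω⟫ ∂P) = ⟪u, v⟫)
    (hMZ : ∀ u : Vec d, ‖u‖ = 1 → (∫ ω, ⟪u, Z ω⟫ ^ 4 ∂P) = MZ)
    (hX : ∀ ω, X ω = Y ω • μ + Z ω)
    (hMZ3 : 3 < MZ) (hlam1 : 1 ≤ lam)
    (c : ℝ) (hc : c ^ 2 = (1 + 1 / ‖μ‖ ^ 2) / (‖μ‖ ^ 4 + 6 * ‖μ‖ ^ 2 + MZ))
    (β : Vec d) (hβ : β = c • μ) :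
    (∀ v : Vec d,
      ((2 * ‖μ‖ ^ 4 + (MZ - 3) * ‖μ‖ ^ 2) / (‖μ‖ ^ 4 + 6 * ‖μ‖ ^ 2 + MZ)) * ‖v‖ ^ 2
        ≤ iteratedDeriv 2
            (fun t : ℝ => popLoss P X hq lam (mkp 0 β + t • mkp 0 v)) 0) ∧
    (iteratedDeriv 2
        (fun t : ℝ => popLoss P X hq lam (mkp 0 β + t • mkp 1 0)) 0
      = 3 * ⟪β, μ⟫ ^ 2 + 3 * ‖β‖ ^ 2 + lam - 1) ∧
    (0 < 3 * ⟪β, μ⟫ ^ 2 + 3 * ‖β‖ ^ 2 + lam - 1) := by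
  -- basic positivity
  have hμn : 0 < ‖μ‖ := norm_pos_iff.mpr hμ
  have hm : 0 < ‖μ‖ ^ 2 := by positivity
  have hD : 0 < ‖μ‖ ^ 4 + 6 * ‖μ‖ ^ 2 + MZ := by nlinarith
  have hS : c ^ 2 * (‖μ‖ ^ 2 * ((‖μ‖ ^ 2) ^ 2 + 6 * ‖μ‖ ^ 2 + MZ)) = ‖μ‖ ^ 2 + 1 := by
    rw [hc]
    have h4 : (‖μ‖:ℝ) ^ 4 = (‖μ‖ ^ 2) ^ 2 := by ring
    rw [h4]
    field_simp
  -- measurability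
  have hXmeq : X = fun ω => Y ω • μ + Z ω := funext hX
  have hXm : Measurable X := by rw [hXmeq]; exact (hY.smul_const μ).add hZ
  have mZu : ∀ u : Vec d, Measurable fun ω => ⟪u, Z ω⟫ := fun u =>
    measurable_const.inner hZ
  have mXu : ∀ u : Vec d, Measurable fun ω => ⟪u, X ω⟫ := fun u =>
    measurable_const.inner hXm
  -- integrability
  have intZabs : ∀ (u : Vec d) (n : ℕ), Integrable (fun ω => |⟪u, Z ω⟫| ^ n) P :=
    aux_intZ P Z hZsg
  have hintZ : ∀ (u v : Vec d) (n m : ℕ), n ≤ 4 → m ≤ 4 →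
      Integrable (fun ω => ⟪u, Z ω⟫ ^ n * ⟪v, Z ω⟫ ^ m) P := fun u v n m hn hm =>
    aux_int_mul P _ _ (mZu u).aestronglyMeasurable (mZu v).aestronglyMeasurable
      (intZabs u 8) (intZabs v 8) n m hn hm
  have intX8 : ∀ u : Vec d, Integrable (fun ω => |⟪u, X ω⟫| ^ (8:ℕ)) P := by
    intro u
    apply Integrable.mono (((integrable_const (|⟪u, μ⟫| ^ (8:ℕ))).add (intZabs u 8)).const_mul
      (2 ^ 8)) (((mXu u).abs.pow_const 8).aestronglyMeasurable)
    filter_upwards with ω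
    show ‖|⟪u, X ω⟫| ^ (8:ℕ)‖ ≤ ‖(2:ℝ) ^ 8 * (|⟪u, μ⟫| ^ (8:ℕ) + |⟪u, Z ω⟫| ^ (8:ℕ))‖
    have hL : ‖|⟪u, X ω⟫| ^ (8:ℕ)‖ = |⟪u, X ω⟫| ^ 8 := by
      rw [Real.norm_eq_abs, abs_of_nonneg (pow_nonneg (abs_nonneg _) 8)]
    have hR : ‖(2:ℝ) ^ 8 * (|⟪u, μ⟫| ^ (8:ℕ) + |⟪u, Z ω⟫| ^ (8:ℕ))‖
        = (2:ℝ) ^ 8 * (|⟪u, μ⟫| ^ 8 + |⟪u, Z ω⟫| ^ 8) := by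
      rw [Real.norm_eq_abs, abs_of_nonneg (by positivity)]
    rw [hL, hR]
    have hy : |Y ω| = 1 := by rcases hYpm ω with h | h <;> rw [h] <;> norm_num
    have h1 : |⟪u, X ω⟫| ≤ |⟪u, μ⟫| + |⟪u, Z ω⟫| := by
      rw [hX ω, inner_add_right, real_inner_smul_right]
      calc |Y ω * ⟪u, μ⟫ + ⟪u, Z ω⟫| ≤ |Y ω * ⟪u, μ⟫| + |⟪u, Z ω⟫| := abs_add_le _ _
        _ = |⟪u, μ⟫| + |⟪u, Z ω⟫| := by rw [abs_mul, hy, one_mul]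
    calc |⟪u, X ω⟫| ^ 8 ≤ (|⟪u, μ⟫| + |⟪u, Z ω⟫|) ^ 8 :=
          pow_le_pow_left₀ (abs_nonneg _) h1 8
      _ ≤ 2 ^ 8 * (|⟪u, μ⟫| ^ 8 + |⟪u, Z ω⟫| ^ 8) :=
          aux_pow_add_le _ _ (abs_nonneg _) (abs_nonneg _) 8
  have hintX : ∀ (u v : Vec d) (n m : ℕ), n ≤ 4 → m ≤ 4 →
      Integrable (fun ω => ⟪u, X ω⟫ ^ n * ⟪v, X ω⟫ ^ m) P := fun u v n m hn hm =>
    aux_int_mul P _ _ (mXu u).aestronglyMeasurable (mXu v).aestronglyMeasurable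
      (intX8 u) (intX8 v) n m hn hm
  have one8 : Integrable (fun _ : Ω => |(1:ℝ)| ^ (8:ℕ)) P := by
    simpa using integrable_const (1:ℝ)
  have hintX1 : ∀ (u : Vec d) (n m : ℕ), n ≤ 4 → m ≤ 4 →
      Integrable (fun ω => ⟪u, X ω⟫ ^ n * (1:ℝ) ^ m) P := fun u n m hn hm =>
    aux_int_mul P _ (fun _ => (1:ℝ)) (mXu u).aestronglyMeasurable
      aestronglyMeasurable_const (intX8 u) one8 n m hn hm
  -- scalar facts about β
  have hp : ⟪β, μ⟫ = c * ‖μ‖ ^ 2 := by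
    rw [hβ, real_inner_smul_left, real_inner_self_eq_norm_sq]
  have hbv : ∀ w : Vec d, ⟪β, w⟫ = c * ⟪w, μ⟫ := fun w => by
    rw [hβ, real_inner_smul_left, real_inner_comm]
  have hβn : ‖β‖ ^ 2 = c ^ 2 * ‖μ‖ ^ 2 := by
    rw [hβ, norm_smul, mul_pow, Real.norm_eq_abs, sq_abs]
  have hβpos : 0 < ‖β‖ ^ 2 := by
    rw [hβn]
    have hc2 : 0 < c ^ 2 := by
      rw [hc]
      have h1 : 0 < 1 + 1 / ‖μ‖ ^ 2 := by positivity
      exact div_pos h1 hD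
    exact mul_pos hc2 hm
  refine ⟨?_, ?_, ?_⟩
  · -- part 1
    intro v
    have funeq : (fun t : ℝ => popLoss P X hq lam (mkp 0 β + t • mkp 0 v)) = fun t =>
        (∫ ω, hq ⟪β, X ω⟫ ∂P)
          + t * (∫ ω, ⟪β, X ω⟫ ^ 3 * ⟪v, X ω⟫ - ⟪β, X ω⟫ * ⟪v, X ω⟫ ∂P)
          + t ^ 2 * (∫ ω, (3 * (⟪β, X ω⟫ ^ 2 * ⟪v, X ω⟫ ^ 2) - ⟪v, X ω⟫ ^ 2) / 2 ∂P)
          + t ^ 3 * (∫ ω, ⟪β, X ω⟫ * ⟪v, X ω⟫ ^ 3 ∂P)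
          + t ^ 4 * (∫ ω, ⟪v, X ω⟫ ^ 4 / 4 ∂P) := by
      funext t
      have h1 : (WithLp.equiv 2 (ℝ × Vec d) (mkp 0 β + t • mkp 0 v)).1 = 0 + t * 0 := rfl
      have h2 : (WithLp.equiv 2 (ℝ × Vec d) (mkp 0 β + t • mkp 0 v)).2 = β + t • v := rfl
      simp only [popLoss, h1, h2]
      have hpt : ∀ ω, hq (0 + t * 0 + ⟪β + t • v, X ω⟫)
          = hq (⟪β, X ω⟫ + t * ⟪v, X ω⟫) := fun ω => by
        congr 1
        rw [inner_add_left, real_inner_smul_left]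
        ring
      simp only [hpt]
      have hexp := aux_expand P (fun ω => ⟪β, X ω⟫) (fun ω => ⟪v, X ω⟫)
        (fun j k hj hk => hintX β v j k hj hk) t
      beta_reduce at hexp
      rw [hexp]
      ring
    rw [funeq, aux_quartic]
    have e : (∫ ω, (3 * (⟪β, X ω⟫ ^ 2 * ⟪v, X ω⟫ ^ 2) - ⟪v, X ω⟫ ^ 2) / 2 ∂P)
        = (∫ ω, (3 * (⟪β, X ω⟫ ^ 2 * ⟪v, X ω⟫ ^ 2) - ⟪v, X ω⟫ ^ 2) ∂P) / 2 :=
      integral_div 2 _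
    rw [e, aux_H P Y Z X μ MZ hY hZ hYpm hY1 hindep hZcov hMZ hX hintZ β v]
    rw [hp, hbv v, hβn, show (‖μ‖:ℝ) ^ 4 = (‖μ‖ ^ 2) ^ 2 from by ring]
    have hfin := aux_ineq (‖μ‖ ^ 2) MZ (c ^ 2) ⟪v, μ⟫ (‖v‖ ^ 2) hm hMZ3 hS
    exact hfin.trans (le_of_eq (by ring))
  · -- part 2
    have funeq : (fun t : ℝ => popLoss P X hq lam (mkp 0 β + t • mkp 1 0)) = fun t =>
        (∫ ω, hq ⟪β, X ω⟫ ∂P)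
          + t * (∫ ω, ⟪β, X ω⟫ ^ 3 * 1 - ⟪β, X ω⟫ * 1 ∂P)
          + t ^ 2 * ((∫ ω, (3 * (⟪β, X ω⟫ ^ 2 * 1 ^ 2) - 1 ^ 2) / 2 ∂P) + lam / 2)
          + t ^ 3 * (∫ ω, ⟪β, X ω⟫ * 1 ^ 3 ∂P)
          + t ^ 4 * (∫ ω, (1:ℝ) ^ 4 / 4 ∂P) := by
      funext t
      have h1 : (WithLp.equiv 2 (ℝ × Vec d) (mkp 0 β + t • mkp 1 0)).1 = 0 + t * 1 := rfl
      have h2 : (WithLp.equiv 2 (ℝ × Vec d) (mkp 0 β + t • mkp 1 0)).2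
          = β + t • (0 : Vec d) := rfl
      simp only [popLoss, h1, h2]
      have hpt : ∀ ω, hq (0 + t * 1 + ⟪β + t • (0 : Vec d), X ω⟫)
          = hq (⟪β, X ω⟫ + t * 1) := fun ω => by
        congr 1
        rw [inner_add_left, real_inner_smul_left, inner_zero_left]
        ring
      simp only [hpt]
      have hexp := aux_expand P (fun ω => ⟪β, X ω⟫) (fun _ => (1:ℝ))
        (fun j k hj hk => hintX1 β j k hj hk) t
      beta_reduce at hexp
      rw [hexp]
      ring
    rw [funeq, aux_quartic]
    have e1 : (fun ω => (3 * (⟪β, X ω⟫ ^ 2 * (1:ℝ) ^ 2) - 1 ^ 2) / 2)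
        = fun ω => (3 * ⟪β, X ω⟫ ^ 2 - 1) / 2 := funext fun ω => by ring
    rw [e1, integral_div 2 _,
      aux_Halpha P Y Z X μ hY hZ hYpm hY1 hindep hZcov hX hintZ β]
    ring
  · -- part 3
    nlinarith [sq_nonneg ⟪β, μ⟫, hβpos, hlam1]

/-- under the centered model with `M_Z > 3` and `λ ≥ 1`, at `(0, ±β^h)` the
Hessian of `L^h_λ` in every direction `w = (0, v)` is at least
`[(2‖μ‖⁴ + (M_Z − 3)‖μ‖²)/(‖μ‖⁴ + 6‖μ‖² + M_Z)]·‖v‖²`, and the pure-α second derivative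
equals `3(β⊤μ)² + 3‖β‖² + λ − 1 > 0`. -/
theorem quartic_population_loss_minima_curvature
    {d : ℕ} {Ω : Type*} [MeasurableSpace Ω] (P : Measure Ω) [IsProbabilityMeasure P]
    (Y : Ω → ℝ) (Z : Ω → Vec d) (X : Ω → Vec d) (μ : Vec d) (M MZ lam : ℝ)
    (hμ : μ ≠ 0) (hlam : 0 ≤ lam)
    (hY : Measurable Y) (hZ : Measurable Z)
    (hYpm : ∀ ω, Y ω = 1 ∨ Y ω = -1)
    (hY1 : P {ω | Y ω = 1} = 1 / 2) (hY2 : P {ω | Y ω = -1} = 1 / 2)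
    (hindep : IndepFun Y Z P)
    (hZsg : ∀ u : Vec d, ‖u‖ = 1 → ∀ p : ℝ, 1 ≤ p →
      Integrable (fun ω => |⟪u, Z ω⟫| ^ p) P ∧
        (∫ ω, |⟪u, Z ω⟫| ^ p ∂P) ^ (1 / p) ≤ Real.sqrt p * M)
    (hZmean : (∫ ω, Z ω ∂P) = 0)
    (hZcov : ∀ u v : Vec d, (∫ ω, ⟪u, Z ω⟫ * ⟪v, Z ω⟫ ∂P) = ⟪u, v⟫)
    (hZsym : ∀ O : Vec d ≃ₗᵢ[ℝ] Vec d,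
      Measure.map (fun ω => O (Z ω)) P = Measure.map Z P)
    (hMZ : ∀ u : Vec d, ‖u‖ = 1 → (∫ ω, ⟪u, Z ω⟫ ^ 4 ∂P) = MZ)
    (hX : ∀ ω, X ω = Y ω • μ + Z ω)
    (hMZ3 : 3 < MZ) (hlam1 : 1 ≤ lam) :
    ∀ β ∈ ({betah μ MZ, -(betah μ MZ)} : Set (Vec d)),
      (∀ v : Vec d,
        ((2 * ‖μ‖ ^ 4 + (MZ - 3) * ‖μ‖ ^ 2) / (‖μ‖ ^ 4 + 6 * ‖μ‖ ^ 2 + MZ)) * ‖v‖ ^ 2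
          ≤ iteratedDeriv 2
              (fun t : ℝ => popLoss P X hq lam (mkp 0 β + t • mkp 0 v)) 0) ∧
      (iteratedDeriv 2
          (fun t : ℝ => popLoss P X hq lam (mkp 0 β + t • mkp 1 0)) 0
        = 3 * ⟪β, μ⟫ ^ 2 + 3 * ‖β‖ ^ 2 + lam - 1) ∧
      (0 < 3 * ⟪β, μ⟫ ^ 2 + 3 * ‖β‖ ^ 2 + lam - 1) := by
  intro β hβ
  have hμn : 0 < ‖μ‖ := norm_pos_iff.mpr hμ
  have hm : 0 < ‖μ‖ ^ 2 := by positivity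
  have hD : 0 < ‖μ‖ ^ 4 + 6 * ‖μ‖ ^ 2 + MZ := by nlinarith
  have harg : 0 ≤ (1 + 1 / ‖μ‖ ^ 2) / (‖μ‖ ^ 4 + 6 * ‖μ‖ ^ 2 + MZ) := by
    apply div_nonneg _ hD.le
    positivity
  have hZsg' : ∀ u : Vec d, ‖u‖ = 1 → ∀ p : ℝ, 1 ≤ p →
      Integrable (fun ω => |⟪u, Z ω⟫| ^ p) P := fun u hu p hp => (hZsg u hu p hp).1
  simp only [Set.mem_insert_iff, Set.mem_singleton_iff] at hβ
  rcases hβ with hβ | hβ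
  · exact aux_main P Y Z X μ MZ lam hμ hY hZ hYpm hY1 hindep hZsg' hZcov hMZ hX hMZ3 hlam1
      (Real.sqrt ((1 + 1 / ‖μ‖ ^ 2) / (‖μ‖ ^ 4 + 6 * ‖μ‖ ^ 2 + MZ)))
      (Real.sq_sqrt harg) β (by rw [hβ]; rfl)
  · exact aux_main P Y Z X μ MZ lam hμ hY hZ hYpm hY1 hindep hZsg' hZcov hMZ hX hMZ3 hlam1
      (-(Real.sqrt ((1 + 1 / ‖μ‖ ^ 2) / (‖μ‖ ^ 4 + 6 * ‖μ‖ ^ 2 + MZ))))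
      (by rw [neg_sq]; exact Real.sq_sqrt harg) β
      (by rw [hβ, betah, neg_smul])
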